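/- For every integer k ≥ 0, every proper 4-coloring f of Q_k with f(b_0) = f(d_0) is odd, i.e. J_a(f) is odd for every color a ∈ Fin 4. -/

import Mathlib

/-- A proper 4-coloring of a simple graph `G`. -/
def IsProperColoring {V : Type*} (G : SimpleGraph V) (f : V → Fin 4) : Prop :=
  ∀ ⦃u v : V⦄, G.Adj u v → f u ≠ f v

/-- `kempeCount G f a b` is the number of `ab`-Kempe chains of `f`, i.e. the number of
connected components of the subgraph of `G` induced on `f⁻¹({a, b})`. -/
noncomputable def kempeCount {V : Type*} (G : SimpleGraph V) (f : V → Fin 4)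
    (a b : Fin 4) : ℕ :=
  Nat.card ((G.induce {v | f v = a ∨ f v = b}).ConnectedComponent)

/-- Tutte's quantity `J_a(f) = p(a,b) + p(a,c) + p(a,d) - p(b,c) - p(b,d) - p(c,d)`,
where `{b, c, d} = Fin 4 \ {a}`. -/
noncomputable def Jcol {V : Type*} (G : SimpleGraph V) (f : V → Fin 4) (a : Fin 4) : ℤ :=
  (∑ x ∈ Finset.univ.erase a, (kempeCount G f a x : ℤ)) -
    ∑ x ∈ Finset.univ.erase a,
      ∑ y ∈ (Finset.univ.erase a).filter (fun y => x < y), (kempeCount G f x y : ℤ)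

/-- The coloring-partition of `f`: the set of its nonempty color classes. -/
def colPart {V : Type*} (f : V → Fin 4) : Set (Set V) :=
  {A | A.Nonempty ∧ ∃ c, A = f ⁻¹' {c}}

/-- `P` is a coloring-partition of `G` if it is the coloring-partition of some proper
4-coloring of `G`. -/
def IsColoringPartition {V : Type*} (G : SimpleGraph V) (P : Set (Set V)) : Prop :=
  ∃ f, IsProperColoring G f ∧ P = colPart f

/-- The set of all color classes of proper 4-colorings of `G`. -/
def colorClasses {V : Type*} (G : SimpleGraph V) : Set (Set V) :=
  {A | A.Nonempty ∧ ∃ f c, IsProperColoring G f ∧ A = f ⁻¹' {c}}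

/-- The 4-coloring complex `B(G)`: vertices are color classes of proper 4-colorings of `G`,
two distinct classes being adjacent iff they are color classes of a common proper
4-coloring. -/
def colorComplex {V : Type*} (G : SimpleGraph V) : SimpleGraph (colorClasses G) :=
  SimpleGraph.fromRel (fun A B => ∃ f, IsProperColoring G f ∧
    (∃ c, (A : Set V) = f ⁻¹' {c}) ∧ (∃ c, (B : Set V) = f ⁻¹' {c}))

/-- Two proper 4-colorings are adjacent if they have a common (nonempty) color class. -/
def ColAdj {V : Type*} (G : SimpleGraph V) (f g : V → Fin 4) : Prop :=
  IsProperColoring G f ∧ IsProperColoring G g ∧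
    ∃ c c', (f ⁻¹' {c}).Nonempty ∧ f ⁻¹' {c} = g ⁻¹' {c'}

/-- Generating relation for the triangulation `Q_k`.  The vertex `(i, 0)` is `a_i`,
`(i, 1)` is `b_i`, `(i, 2)` is `c_i` and `(i, 3)` is `d_i`.  Edges: the 4-cycles
`a_i b_i c_i d_i`, connecting edges between consecutive cycles, and the chords
`a_0 c_0` and `a_{k+1} c_{k+1}`. -/
def qkRel (k : ℕ) (u v : Fin (k + 2) × Fin 4) : Prop :=
  (u.1 = v.1 ∧ v.2 = u.2 + 1) ∨
  ((v.1 : ℕ) = (u.1 : ℕ) + 1 ∧ (v.2 = u.2 ∨ v.2 = u.2 + 1)) ∨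
  ((u.1 : ℕ) = 0 ∧ (v.1 : ℕ) = 0 ∧ u.2 = 0 ∧ v.2 = 2) ∨
  ((u.1 : ℕ) = k + 1 ∧ (v.1 : ℕ) = k + 1 ∧ u.2 = 0 ∧ v.2 = 2)

/-- The triangulation `Q_k`. -/
def Qk (k : ℕ) : SimpleGraph (Fin (k + 2) × Fin 4) := SimpleGraph.fromRel (qkRel k)

set_option maxRecDepth 4000

namespace TII

abbrev Q4 := Fin 4 × Fin 4 × Fin 4 × Fin 4

def sel (q : Q4) (t : Fin 4) : Fin 4 :=
  if t = 0 then q.1 else if t = 1 then q.2.1 else if t = 2 then q.2.2.1 else q.2.2.2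

def S8 : List Q4 :=
  [(0,1,2,1),(0,3,2,3),(1,0,1,2),(1,2,1,0),(2,1,0,1),(2,3,0,3),(3,0,3,2),(3,2,3,0)]

def T16 : List (Q4 × Q4) :=
  [((0,1,2,1),(2,3,0,3)), ((0,1,2,1),(3,2,3,0)),
   ((0,3,2,3),(1,2,1,0)), ((0,3,2,3),(2,1,0,1)),
   ((1,0,1,2),(0,3,2,3)), ((1,0,1,2),(3,2,3,0)),
   ((1,2,1,0),(2,3,0,3)), ((1,2,1,0),(3,0,3,2)),
   ((2,1,0,1),(0,3,2,3)), ((2,1,0,1),(3,0,3,2)),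
   ((2,3,0,3),(0,1,2,1)), ((2,3,0,3),(1,0,1,2)),
   ((3,0,3,2),(0,1,2,1)), ((3,0,3,2),(1,2,1,0)),
   ((3,2,3,0),(1,0,1,2)), ((3,2,3,0),(2,1,0,1))]

set_option synthInstance.maxSize 1000 in
set_option synthInstance.maxHeartbeats 400000 in
lemma step_dec : ∀ q ∈ S8, ∀ q' : Q4,
    q'.1 ≠ q.1 → q'.1 ≠ q.2.2.2 →
    q'.2.1 ≠ q.1 → q'.2.1 ≠ q.2.1 →
    q'.2.2.1 ≠ q.2.1 → q'.2.2.1 ≠ q.2.2.1 →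
    q'.2.2.2 ≠ q.2.2.1 → q'.2.2.2 ≠ q.2.2.2 →
    q'.1 ≠ q'.2.1 → q'.2.1 ≠ q'.2.2.1 → q'.2.2.1 ≠ q'.2.2.2 → q'.2.2.2 ≠ q'.1 →
    (q, q') ∈ T16 := by decide

lemma T16_snd : ∀ tr ∈ T16, tr.2 ∈ S8 := by decide

variable {k : ℕ}

lemma adj_of_rel {u v : Fin (k+2) × Fin 4} (hne : u ≠ v) (h : qkRel k u v) : (Qk k).Adj u v := by
  rw [Qk, SimpleGraph.fromRel_adj]; exact ⟨hne, Or.inl h⟩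

lemma fin4_ne_succ : ∀ t : Fin 4, t ≠ t + 1 := by decide

lemma adj_cycle (i : Fin (k+2)) (t : Fin 4) : (Qk k).Adj (i,t) (i,t+1) := by
  refine adj_of_rel (fun h => ?_) (Or.inl ⟨rfl, rfl⟩)
  exact fin4_ne_succ t (congrArg Prod.snd h)

lemma adj_cross {i j : Fin (k+2)} (h : (j:ℕ) = (i:ℕ) + 1) (t : Fin 4) :
    (Qk k).Adj (i,t) (j,t) := by
  refine adj_of_rel (fun hh => ?_) (Or.inr (Or.inl ⟨h, Or.inl rfl⟩))
  have h1 : i = j := congrArg Prod.fst hh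
  rw [h1] at h; omega

lemma adj_cross' {i j : Fin (k+2)} (h : (j:ℕ) = (i:ℕ) + 1) (t : Fin 4) :
    (Qk k).Adj (i,t) (j,t+1) := by
  refine adj_of_rel (fun hh => ?_) (Or.inr (Or.inl ⟨h, Or.inr rfl⟩))
  have h1 : i = j := congrArg Prod.fst hh
  rw [h1] at h; omega

def quad (g : Fin (k+2) × Fin 4 → Fin 4) (i : Fin (k+2)) : Q4 :=
  (g (i,0), g (i,1), g (i,2), g (i,3))

lemma sel_quad (g : Fin (k+2) × Fin 4 → Fin 4) (i : Fin (k+2)) (t : Fin 4) :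
    sel (quad g i) t = g (i,t) := by
  fin_cases t <;> rfl

lemma zero_fin (h : 0 < k+2) : (⟨0,h⟩ : Fin (k+2)) = 0 := rfl

variable {g : Fin (k+2) × Fin 4 → Fin 4}

lemma trans_mem_of (hg : IsProperColoring (Qk k) g) {i : ℕ} (hi1 : i + 1 < k + 2)
    (hmem : quad g ⟨i, by omega⟩ ∈ S8) :
    (quad g ⟨i, by omega⟩, quad g ⟨i+1, hi1⟩) ∈ T16 := by
  set i0 : Fin (k+2) := ⟨i, by omega⟩
  set i1 : Fin (k+2) := ⟨i+1, hi1⟩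
  have hc : (i1 : ℕ) = (i0 : ℕ) + 1 := rfl
  refine step_dec _ hmem _
    (hg (adj_cross hc 0)).symm
    (by have := (hg (adj_cross' hc 3)).symm; exact this)
    (by have := (hg (adj_cross' hc 0)).symm; exact this)
    (hg (adj_cross hc 1)).symm
    (by have := (hg (adj_cross' hc 1)).symm; exact this)
    (hg (adj_cross hc 2)).symm
    (by have := (hg (adj_cross' hc 2)).symm; exact this)
    (hg (adj_cross hc 3)).symm
    (hg (adj_cycle i1 0))
    (hg (adj_cycle i1 1))
    (hg (adj_cycle i1 2))
    (by have := (hg (adj_cycle i1 3)); exact this)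

lemma quad_mem (hg : IsProperColoring (Qk k) g) (h0 : quad g 0 = (0,1,2,1)) :
    ∀ i : ℕ, (hi : i < k+2) → quad g ⟨i,hi⟩ ∈ S8
  | 0, hi => by rw [zero_fin, h0]; decide
  | (i+1), hi => T16_snd _ (trans_mem_of hg hi (quad_mem hg h0 i (by omega)))

lemma trans_mem (hg : IsProperColoring (Qk k) g) (h0 : quad g 0 = (0,1,2,1)) {i : ℕ}
    (hi1 : i + 1 < k + 2) :
    (quad g ⟨i, by omega⟩, quad g ⟨i+1, hi1⟩) ∈ T16 :=
  trans_mem_of hg hi1 (quad_mem hg h0 i (by omega))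


/-! ### Generic component-count helpers -/

lemma card_cc_one {W : Type*} (G' : SimpleGraph W) (h : G'.Connected) :
    Nat.card G'.ConnectedComponent = 1 := by
  rw [Nat.card_eq_one_iff_unique]
  refine ⟨⟨fun a b => ?_⟩, ?_⟩
  · refine SimpleGraph.ConnectedComponent.ind₂ (fun u v => ?_) a b
    exact SimpleGraph.ConnectedComponent.sound (h.preconnected u v)
  · obtain ⟨x⟩ := h.nonempty
    exact ⟨G'.connectedComponentMk x⟩

/-! ### The class subgraph -/

def cls (g : Fin (k+2) × Fin 4 → Fin 4) (p r : Fin 4) : Set (Fin (k+2) × Fin 4) :=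
  {v | g v = p ∨ g v = r}

lemma ind_adj {S : Set (Fin (k+2) × Fin 4)} {u v : Fin (k+2) × Fin 4}
    (hu : u ∈ S) (hv : v ∈ S) (h : (Qk k).Adj u v) :
    ((Qk k).induce S).Adj ⟨u,hu⟩ ⟨v,hv⟩ := h

lemma fin4_stp3 : ∀ t t1 : Fin 4, t1 = t + 3 → t = t1 + 1 := by decide

def stp (a b : Fin 4) : Prop := b = a ∨ b = a + 1 ∨ b = a + 3

instance (a b : Fin 4) : Decidable (stp a b) := by unfold stp; infer_instance

lemma reach_stp {g : Fin (k+2) × Fin 4 → Fin 4} {p r : Fin 4} (x : Fin (k+2)) {t t1 : Fin 4}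
    (h : stp t t1) (ht : (x,t) ∈ cls g p r) (ht1 : (x,t1) ∈ cls g p r) :
    ((Qk k).induce (cls g p r)).Reachable ⟨(x,t),ht⟩ ⟨(x,t1),ht1⟩ := by
  rcases h with h | h | h
  · subst h; exact SimpleGraph.Reachable.refl _
  · subst h; exact (ind_adj ht ht1 (adj_cycle x t)).reachable
  · have h2 := fin4_stp3 t t1 h
    subst h2
    exact ((ind_adj ht1 ht (adj_cycle x t1)).reachable).symm

def pairs5 : List (Fin 4 × Fin 4) := [(0,1),(0,2),(0,3),(1,2),(2,3)]

lemma schema_dec : ∀ pr ∈ pairs5, ∀ tr ∈ T16, ∀ t : Fin 4,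
    (sel tr.2 t = pr.1 ∨ sel tr.2 t = pr.2) →
    ∃ t1 t2 s : Fin 4, stp t t1 ∧ stp t1 t2 ∧
      (sel tr.2 t1 = pr.1 ∨ sel tr.2 t1 = pr.2) ∧
      (sel tr.2 t2 = pr.1 ∨ sel tr.2 t2 = pr.2) ∧
      (s = t2 ∨ s = t2 + 3) ∧ (sel tr.1 s = pr.1 ∨ sel tr.1 s = pr.2) := by decide

section ReachDown

variable {g : Fin (k+2) × Fin 4 → Fin 4} {p r : Fin 4}

lemma reach_down (hg : IsProperColoring (Qk k) g) (h0 : quad g 0 = (0,1,2,1))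
    (hpr : (p,r) ∈ pairs5) :
    ∀ (i : ℕ) (hi : i < k+2) (t : Fin 4) (hv : ((⟨i,hi⟩ : Fin (k+2)),t) ∈ cls g p r),
      ∃ (t0 : Fin 4) (ht0 : ((0 : Fin (k+2)),t0) ∈ cls g p r),
        ((Qk k).induce (cls g p r)).Reachable ⟨((⟨i,hi⟩ : Fin (k+2)),t),hv⟩ ⟨((0 : Fin (k+2)),t0),ht0⟩
  | 0, hi, t, hv => ⟨t, hv, SimpleGraph.Reachable.refl _⟩
  | (i+1), hi, t, hv => by
    have hi' : i < k + 2 := by omega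
    have htr := trans_mem hg h0 (i := i) hi
    obtain ⟨t1, t2, s, hst1, hst2, hm1, hm2, hs, hms⟩ :=
      schema_dec _ hpr _ htr t
        (by rw [sel_quad]; exact hv)
    rw [sel_quad] at hm1 hm2 hms
    have hm1' : ((⟨i+1,hi⟩ : Fin (k+2)), t1) ∈ cls g p r := hm1
    have hm2' : ((⟨i+1,hi⟩ : Fin (k+2)), t2) ∈ cls g p r := hm2
    have hms' : ((⟨i,hi'⟩ : Fin (k+2)), s) ∈ cls g p r := hms
    have hcr : ((⟨i+1,hi⟩ : Fin (k+2)) : ℕ) = ((⟨i,hi'⟩ : Fin (k+2)) : ℕ) + 1 := rfl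
    have hdown : ((Qk k).induce (cls g p r)).Reachable ⟨((⟨i+1,hi⟩ : Fin (k+2)), t2), hm2'⟩
        ⟨((⟨i,hi'⟩ : Fin (k+2)), s), hms'⟩ := by
      rcases hs with hs | hs
      · subst hs
        exact ((ind_adj hms' hm2' (adj_cross hcr s)).reachable).symm
      · have h2 := fin4_stp3 t2 s hs
        subst h2
        exact ((ind_adj hms' hm2' (adj_cross' hcr s)).reachable).symm
    obtain ⟨t0, ht0, hrest⟩ := reach_down hg h0 hpr i hi' s hms'
    exact ⟨t0, ht0,
      (((reach_stp _ hst1 hv hm1').trans (reach_stp _ hst2 hm1' hm2')).trans hdown).trans hrest⟩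

end ReachDown

section Layer0

lemma fin4_02 : (0 : Fin 4) ≠ 2 := by decide

lemma adj_chord0 : (Qk k).Adj ((0 : Fin (k+2)), 0) ((0 : Fin (k+2)), 2) := by
  refine adj_of_rel (fun hh => fin4_02 (congrArg Prod.snd hh))
    (Or.inr (Or.inr (Or.inl ⟨by simp, by simp, rfl, rfl⟩)))

lemma adj_chordL (h : k + 1 < k + 2) : (Qk k).Adj (⟨k+1, h⟩, 0) (⟨k+1, h⟩, 2) := by
  refine adj_of_rel (fun hh => fin4_02 (congrArg Prod.snd hh))
    (Or.inr (Or.inr (Or.inr ⟨rfl, rfl, rfl, rfl⟩)))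

variable {g : Fin (k+2) × Fin 4 → Fin 4} {p r : Fin 4}

lemma mem_sel (h0 : quad g 0 = (0,1,2,1)) {t : Fin 4}
    (h : ((0 : Fin (k+2)),t) ∈ cls g p r) :
    sel (0,1,2,1) t = p ∨ sel (0,1,2,1) t = r := by
  rw [← h0, sel_quad]; exact h

lemma layer0_base (h0 : quad g 0 = (0,1,2,1)) (hpr : (p,r) ∈ pairs5) :
    ∃ (t0 : Fin 4) (ht0 : ((0 : Fin (k+2)),t0) ∈ cls g p r),
      ∀ (t : Fin 4) (h : ((0 : Fin (k+2)),t) ∈ cls g p r),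
        ((Qk k).induce (cls g p r)).Reachable ⟨((0 : Fin (k+2)),t),h⟩ ⟨((0 : Fin (k+2)),t0),ht0⟩ := by
  have h00 : g ((0 : Fin (k+2)),0) = 0 := congrArg (·.1) h0
  have h01 : g ((0 : Fin (k+2)),1) = 1 := congrArg (·.2.1) h0
  have h02 : g ((0 : Fin (k+2)),2) = 2 := congrArg (·.2.2.1) h0
  have h03 : g ((0 : Fin (k+2)),3) = 1 := congrArg (·.2.2.2) h0
  have hcyc : ∀ t : Fin 4, (Qk k).Adj ((0 : Fin (k+2)), t) ((0 : Fin (k+2)), t+1) :=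
    fun t => adj_cycle _ t
  simp only [pairs5, List.mem_cons, List.not_mem_nil, or_false, Prod.mk.injEq] at hpr
  rcases hpr with ⟨hp,hr⟩|⟨hp,hr⟩|⟨hp,hr⟩|⟨hp,hr⟩|⟨hp,hr⟩ <;> subst hp <;> subst hr
  · refine ⟨0, Or.inl h00, fun t h => ?_⟩
    fin_cases t
    · exact SimpleGraph.Reachable.refl _
    · exact ((ind_adj (Or.inl h00) h (hcyc 0)).reachable).symm
    · exact absurd (mem_sel h0 h) (by decide)
    · exact (ind_adj h (Or.inl h00) (hcyc 3)).reachable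
  · refine ⟨0, Or.inl h00, fun t h => ?_⟩
    fin_cases t
    · exact SimpleGraph.Reachable.refl _
    · exact absurd (mem_sel h0 h) (by decide)
    · exact ((ind_adj (Or.inl h00) h adj_chord0).reachable).symm
    · exact absurd (mem_sel h0 h) (by decide)
  · refine ⟨0, Or.inl h00, fun t h => ?_⟩
    fin_cases t
    · exact SimpleGraph.Reachable.refl _
    · exact absurd (mem_sel h0 h) (by decide)
    · exact absurd (mem_sel h0 h) (by decide)
    · exact absurd (mem_sel h0 h) (by decide)
  · refine ⟨1, Or.inl h01, fun t h => ?_⟩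
    fin_cases t
    · exact absurd (mem_sel h0 h) (by decide)
    · exact SimpleGraph.Reachable.refl _
    · exact ((ind_adj (Or.inl h01) h (hcyc 1)).reachable).symm
    · exact ((ind_adj (Or.inr h02) h (hcyc 2)).reachable).symm.trans
        ((ind_adj (Or.inl h01) (Or.inr h02) (hcyc 1)).reachable).symm
  · refine ⟨2, Or.inl h02, fun t h => ?_⟩
    fin_cases t
    · exact absurd (mem_sel h0 h) (by decide)
    · exact absurd (mem_sel h0 h) (by decide)
    · exact SimpleGraph.Reachable.refl _
    · exact absurd (mem_sel h0 h) (by decide)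

lemma cls_connected (hg : IsProperColoring (Qk k) g) (h0 : quad g 0 = (0,1,2,1))
    (hpr : (p,r) ∈ pairs5) : ((Qk k).induce (cls g p r)).Connected := by
  obtain ⟨t0, ht0, hbase⟩ := layer0_base h0 hpr
  rw [SimpleGraph.connected_iff]
  refine ⟨?_, ⟨⟨((0 : Fin (k+2)), t0), ht0⟩⟩⟩
  rintro ⟨⟨j, t⟩, hv⟩ ⟨⟨j', t'⟩, hv'⟩
  obtain ⟨i, hi⟩ := j
  obtain ⟨i', hi'⟩ := j'
  obtain ⟨s1, hs1, hr1⟩ := reach_down hg h0 hpr i hi t hv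
  obtain ⟨s2, hs2, hr2⟩ := reach_down hg h0 hpr i' hi' t' hv'
  exact (hr1.trans (hbase s1 hs1)).trans ((hr2.trans (hbase s2 hs2)).symm)

end Layer0

/-! ### The pair (1,3): exactly two Kempe chains -/

def typA (q : Q4) : Bool := q.1 = q.2.2.1

lemma pos_dec : ∀ tr ∈ T16, ∀ p : Fin 4,
    (∀ t, (sel tr.1 t = 1 ∨ sel tr.1 t = 3) ↔ (t = p ∨ t = p + 2)) →
    ∀ t, (sel tr.2 t = 1 ∨ sel tr.2 t = 3) ↔
      (t = (if typA tr.1 = typA tr.2 then p else p + 1) ∨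
       t = (if typA tr.1 = typA tr.2 then p else p + 1) + 2) := by decide

lemma lastB_dec : ∀ q ∈ S8, q.1 ≠ q.2.2.1 →
    ¬(q.1 = 1 ∨ q.1 = 3) ∧ ¬(q.2.2.1 = 1 ∨ q.2.2.1 = 3) := by decide

lemma cycle_clash : ∀ p t : Fin 4, (t = p ∨ t = p + 2) → (t + 1 = p ∨ t + 1 = p + 2) → False := by
  decide

lemma cross_side : ∀ p p' t t' : Fin 4, (p' = p ∨ p' = p + 1) → (t' = t ∨ t' = t + 1) →
    (t = p ∨ t = p + 2) → (t' = p' ∨ t' = p' + 2) → ((t = p) ↔ (t' = p')) := by decide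

def Afun (k : ℕ) (g : Fin (k+2) × Fin 4 → Fin 4) (i : ℕ) : Bool :=
  if h : i < k+2 then decide (g (⟨i,h⟩,0) = g (⟨i,h⟩,2)) else true

def posFun (k : ℕ) (g : Fin (k+2) × Fin 4 → Fin 4) : ℕ → Fin 4
  | 0 => 1
  | (i+1) => if Afun k g i = Afun k g (i+1) then posFun k g i else posFun k g i + 1

section Pair13

variable {g : Fin (k+2) × Fin 4 → Fin 4}

lemma Afun_eq (i : ℕ) (hi : i < k+2) : Afun k g i = typA (quad g ⟨i,hi⟩) := by
  rw [Afun, dif_pos hi]; rfl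

lemma pos_succ (i : ℕ) :
    posFun k g (i+1) = posFun k g i ∨ posFun k g (i+1) = posFun k g i + 1 := by
  rw [posFun]; split
  · exact Or.inl rfl
  · exact Or.inr rfl

lemma claim1 (hg : IsProperColoring (Qk k) g) (h0 : quad g 0 = (0,1,2,1)) :
    ∀ (i : ℕ) (hi : i < k+2) (t : Fin 4),
      (g (⟨i,hi⟩,t) = 1 ∨ g (⟨i,hi⟩,t) = 3) ↔ (t = posFun k g i ∨ t = posFun k g i + 2)
  | 0, hi, t => by
    have hz : (⟨0,hi⟩ : Fin (k+2)) = (0 : Fin (k+2)) := rfl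
    rw [hz, show g ((0 : Fin (k+2)), t) = sel (quad g 0) t from (sel_quad g 0 t).symm, h0]
    show (sel (0,1,2,1) t = 1 ∨ sel (0,1,2,1) t = 3) ↔ (t = 1 ∨ t = 1 + 2)
    revert t; decide
  | (i+1), hi, t => by
    have hi' : i < k + 2 := by omega
    have IH := claim1 hg h0 i hi'
    have htr := trans_mem hg h0 (i := i) hi
    have hd := pos_dec _ htr (posFun k g i) (fun s => by rw [sel_quad]; exact IH s) t
    rw [sel_quad] at hd
    rw [hd, posFun, Afun_eq i hi', Afun_eq (i+1) hi]
  termination_by i => i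

def sfun (k : ℕ) (g : Fin (k+2) × Fin 4 → Fin 4) (v : Fin (k+2) × Fin 4) : Bool :=
  decide (v.2 = posFun k g (v.1 : ℕ))

lemma s_rel (hg : IsProperColoring (Qk k) g) (h0 : quad g 0 = (0,1,2,1))
    {u v : Fin (k+2) × Fin 4} (hu : u ∈ cls g 1 3) (hv : v ∈ cls g 1 3)
    (h : qkRel k u v) : sfun k g u = sfun k g v := by
  obtain ⟨⟨i,hi⟩, t⟩ := u
  obtain ⟨⟨j,hj⟩, s⟩ := v
  rcases h with ⟨h1, h2⟩ | ⟨h1, h2⟩ | ⟨h1, h2, h3, h4⟩ | ⟨h1, h2, h3, h4⟩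
  · -- cycle edge: impossible for this pair
    exfalso
    have hij : i = j := congrArg Fin.val h1
    subst hij
    have c1 := (claim1 hg h0 i hi t).mp hu
    have c2 := (claim1 hg h0 i hi s).mp (by exact hv)
    have h2' : s = t + 1 := h2
    rw [h2'] at c2
    exact cycle_clash _ _ c1 c2
  · -- cross edge
    simp only at h1
    have hj' : j = i + 1 := h1
    subst hj'
    have hi' : i < k + 2 := by omega
    show decide (t = posFun k g i) = decide (s = posFun k g (i+1))
    rw [decide_eq_decide]
    have h2' : s = t ∨ s = t + 1 := h2
    exact cross_side _ _ _ _ (pos_succ i) h2'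
      ((claim1 hg h0 i hi t).mp hu) ((claim1 hg h0 (i+1) hj s).mp hv)
  · -- chord at layer 0
    exfalso
    simp only at h1 h2
    have hi0 : i = 0 := h1
    subst hi0
    have h3' : t = 0 := h3
    have hz : (⟨0,hi⟩ : Fin (k+2)) = (0 : Fin (k+2)) := rfl
    rw [h3', hz] at hu
    have h00 : g ((0 : Fin (k+2)),0) = 0 := congrArg (·.1) h0
    have hu' : g ((0 : Fin (k+2)),0) = 1 ∨ g ((0 : Fin (k+2)),0) = 3 := hu
    rw [h00] at hu'
    rcases hu' with h|h <;> exact absurd h (by decide)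
  · -- chord at layer k+1
    exfalso
    simp only at h1 h2
    have hiL : i = k + 1 := h1
    subst hiL
    have hch : g ((⟨k+1,hi⟩ : Fin (k+2)),0) ≠ g ((⟨k+1,hi⟩ : Fin (k+2)),2) :=
      hg (adj_chordL hi)
    have hB := lastB_dec _ (quad_mem hg h0 (k+1) hi) hch
    have h3' : t = 0 := h3
    rw [h3'] at hu
    exact hB.1 hu

end Pair13

section Pair13b

variable {g : Fin (k+2) × Fin 4 → Fin 4}

lemma reach_congr {S : Set (Fin (k+2) × Fin 4)} {u v : Fin (k+2) × Fin 4}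
    {w : ↥S} (h : u = v) (hu : u ∈ S) (hv : v ∈ S)
    (hr : ((Qk k).induce S).Reachable ⟨v,hv⟩ w) :
    ((Qk k).induce S).Reachable ⟨u,hu⟩ w := by subst h; exact hr

lemma mem13_pos (hg : IsProperColoring (Qk k) g) (h0 : quad g 0 = (0,1,2,1))
    (i : ℕ) (hi : i < k+2) :
    ((⟨i,hi⟩ : Fin (k+2)), posFun k g i) ∈ cls g 1 3 :=
  (claim1 hg h0 i hi _).mpr (Or.inl rfl)

lemma mem13_pos2 (hg : IsProperColoring (Qk k) g) (h0 : quad g 0 = (0,1,2,1))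
    (i : ℕ) (hi : i < k+2) :
    ((⟨i,hi⟩ : Fin (k+2)), posFun k g i + 2) ∈ cls g 1 3 :=
  (claim1 hg h0 i hi _).mpr (Or.inr rfl)

lemma fin4_add23 : ∀ p : Fin 4, p + 1 + 2 = (p + 2) + 1 := by decide

lemma reach13_b (hg : IsProperColoring (Qk k) g) (h0 : quad g 0 = (0,1,2,1)) :
    ∀ (i : ℕ) (hi : i < k+2),
      ((Qk k).induce (cls g 1 3)).Reachable
        ⟨((⟨i,hi⟩ : Fin (k+2)), posFun k g i), mem13_pos hg h0 i hi⟩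
        ⟨((0 : Fin (k+2)), 1), mem13_pos hg h0 0 (by omega)⟩
  | 0, hi => SimpleGraph.Reachable.refl _
  | (i+1), hi => by
    have hi' : i < k + 2 := by omega
    have hcr : ((⟨i+1,hi⟩ : Fin (k+2)) : ℕ) = ((⟨i,hi'⟩ : Fin (k+2)) : ℕ) + 1 := rfl
    have htail := reach13_b hg h0 i hi'
    rcases pos_succ (g := g) i with hp | hp
    · refine reach_congr (congrArg _ hp) _
        ((claim1 hg h0 (i+1) hi _).mpr (Or.inl hp.symm)) ?_
      exact (((ind_adj (mem13_pos hg h0 i hi') _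
        (adj_cross hcr (posFun k g i))).reachable).symm).trans htail
    · refine reach_congr (congrArg _ hp) _
        ((claim1 hg h0 (i+1) hi _).mpr (Or.inl hp.symm)) ?_
      exact (((ind_adj (mem13_pos hg h0 i hi') _
        (adj_cross' hcr (posFun k g i))).reachable).symm).trans htail

lemma reach13_d (hg : IsProperColoring (Qk k) g) (h0 : quad g 0 = (0,1,2,1)) :
    ∀ (i : ℕ) (hi : i < k+2),
      ((Qk k).induce (cls g 1 3)).Reachable
        ⟨((⟨i,hi⟩ : Fin (k+2)), posFun k g i + 2), mem13_pos2 hg h0 i hi⟩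
        ⟨((0 : Fin (k+2)), 3), mem13_pos2 hg h0 0 (by omega)⟩
  | 0, hi => SimpleGraph.Reachable.refl _
  | (i+1), hi => by
    have hi' : i < k + 2 := by omega
    have hcr : ((⟨i+1,hi⟩ : Fin (k+2)) : ℕ) = ((⟨i,hi'⟩ : Fin (k+2)) : ℕ) + 1 := rfl
    have htail := reach13_d hg h0 i hi'
    rcases pos_succ (g := g) i with hp | hp
    · refine reach_congr (congrArg (fun x => ((⟨i+1,hi⟩ : Fin (k+2)), x + 2)) hp) _
        ((claim1 hg h0 (i+1) hi _).mpr (Or.inr (by rw [hp]))) ?_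
      exact (((ind_adj (mem13_pos2 hg h0 i hi') _
        (adj_cross hcr (posFun k g i + 2))).reachable).symm).trans htail
    · refine reach_congr
        (by rw [hp, fin4_add23] :
          ((⟨i+1,hi⟩ : Fin (k+2)), posFun k g (i+1) + 2)
            = ((⟨i+1,hi⟩ : Fin (k+2)), (posFun k g i + 2) + 1)) _
        ((claim1 hg h0 (i+1) hi _).mpr (Or.inr (by rw [hp, fin4_add23]))) ?_
      exact (((ind_adj (mem13_pos2 hg h0 i hi') _
        (adj_cross' hcr (posFun k g i + 2))).reachable).symm).trans htail

end Pair13b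

section Card13

variable {g : Fin (k+2) × Fin 4 → Fin 4}

lemma fin4_p2 : ∀ p : Fin 4, ¬(p + 2 = p) := by decide

lemma sfun_adj (hg : IsProperColoring (Qk k) g) (h0 : quad g 0 = (0,1,2,1))
    (a b : ↥(cls g 1 3)) (hab : ((Qk k).induce (cls g 1 3)).Adj a b) :
    sfun k g ↑a = sfun k g ↑b := by
  have h' : (Qk k).Adj ↑a ↑b := hab
  rw [Qk, SimpleGraph.fromRel_adj] at h'
  rcases h'.2 with hr | hr
  · exact s_rel hg h0 a.2 b.2 hr
  · exact (s_rel hg h0 b.2 a.2 hr).symm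

lemma sfun_walk (hg : IsProperColoring (Qk k) g) (h0 : quad g 0 = (0,1,2,1)) :
    ∀ {a b : ↥(cls g 1 3)} (_ : ((Qk k).induce (cls g 1 3)).Walk a b),
      sfun k g ↑a = sfun k g ↑b
  | _, _, SimpleGraph.Walk.nil => rfl
  | _, _, SimpleGraph.Walk.cons ha p => (sfun_adj hg h0 _ _ ha).trans (sfun_walk hg h0 p)

lemma card13 (hg : IsProperColoring (Qk k) g) (h0 : quad g 0 = (0,1,2,1)) :
    Nat.card ((Qk k).induce (cls g 1 3)).ConnectedComponent = 2 := by
  classical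
  have h01 : g ((0 : Fin (k+2)),1) = 1 := congrArg (·.2.1) h0
  have h03 : g ((0 : Fin (k+2)),3) = 1 := congrArg (·.2.2.2) h0
  set H := (Qk k).induce (cls g 1 3) with hH
  let b0 : ↥(cls g 1 3) := ⟨((0 : Fin (k+2)),1), Or.inl h01⟩
  let d0 : ↥(cls g 1 3) := ⟨((0 : Fin (k+2)),3), Or.inl h03⟩
  have hwalk : ∀ a b : ↥(cls g 1 3), H.Reachable a b → sfun k g ↑a = sfun k g ↑b :=
    fun a b hab => hab.elim (fun w => sfun_walk hg h0 w)
  let F : H.ConnectedComponent → Bool := Quot.lift (fun v => sfun k g ↑v) hwalk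
  have hsb0 : sfun k g ((0 : Fin (k+2)),1) = true := by
    show decide ((1 : Fin 4) = posFun k g (((0 : Fin (k+2)) : ℕ))) = true
    have hz : ((0 : Fin (k+2)) : ℕ) = 0 := rfl
    rw [hz]
    exact decide_eq_true rfl
  have hsd0 : sfun k g ((0 : Fin (k+2)),3) = false := by
    show decide ((3 : Fin 4) = posFun k g (((0 : Fin (k+2)) : ℕ))) = false
    have hz : ((0 : Fin (k+2)) : ℕ) = 0 := rfl
    rw [hz]
    exact decide_eq_false (by exact fin4_p2 1)
  have key : ∀ u : ↥(cls g 1 3),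
      (sfun k g ↑u = true ∧ H.connectedComponentMk u = H.connectedComponentMk b0) ∨
      (sfun k g ↑u = false ∧ H.connectedComponentMk u = H.connectedComponentMk d0) := by
    rintro ⟨⟨⟨i,hi⟩,t⟩,hm⟩
    rcases (claim1 hg h0 i hi t).mp hm with ht | ht
    · subst ht
      refine Or.inl ⟨decide_eq_true rfl, ?_⟩
      exact SimpleGraph.ConnectedComponent.sound (reach13_b hg h0 i hi)
    · subst ht
      refine Or.inr ⟨decide_eq_false (fin4_p2 _), ?_⟩
      exact SimpleGraph.ConnectedComponent.sound (reach13_d hg h0 i hi)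
  have inj : ∀ u v : ↥(cls g 1 3),
      F (H.connectedComponentMk u) = F (H.connectedComponentMk v) →
      H.connectedComponentMk u = H.connectedComponentMk v := by
    intro u v h
    have hFu : F (H.connectedComponentMk u) = sfun k g ↑u := rfl
    have hFv : F (H.connectedComponentMk v) = sfun k g ↑v := rfl
    rw [hFu, hFv] at h
    rcases key u with ⟨hs,he⟩|⟨hs,he⟩ <;> rcases key v with ⟨hs',he'⟩|⟨hs',he'⟩
    · exact he.trans he'.symm
    · rw [hs, hs'] at h; exact absurd h (by decide)
    · rw [hs, hs'] at h; exact absurd h (by decide)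
    · exact he.trans he'.symm
  have hinj : Function.Injective F := fun c1 c2 =>
    SimpleGraph.ConnectedComponent.ind₂ inj c1 c2
  have hsurj : Function.Surjective F := by
    intro b
    cases b
    · exact ⟨H.connectedComponentMk d0, hsd0⟩
    · exact ⟨H.connectedComponentMk b0, hsb0⟩
  have := Nat.card_eq_of_bijective F ⟨hinj, hsurj⟩
  rw [this]
  simp [Nat.card_eq_fintype_card]

end Card13

/-! ### The Kempe count table -/

section Table

variable {g : Fin (k+2) × Fin 4 → Fin 4}

lemma kempe_symm {V : Type*} (G : SimpleGraph V) (f : V → Fin 4) (a b : Fin 4) :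
    kempeCount G f a b = kempeCount G f b a := by
  unfold kempeCount
  rw [show {v | f v = a ∨ f v = b} = {v | f v = b ∨ f v = a} from Set.ext fun v => or_comm]

lemma kempe_cls (p r : Fin 4) :
    kempeCount (Qk k) g p r = Nat.card ((Qk k).induce (cls g p r)).ConnectedComponent := rfl

lemma fin4_all : ∀ b : Fin 4, b = 0 ∨ b = 1 ∨ b = 2 ∨ b = 3 := by decide

lemma kempe_table (hg : IsProperColoring (Qk k) g) (h0 : quad g 0 = (0,1,2,1))
    (c d : Fin 4) (hcd : c ≠ d) :
    kempeCount (Qk k) g c d = if (c = 1 ∧ d = 3) ∨ (c = 3 ∧ d = 1) then 2 else 1 := by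
  have conn : ∀ p r : Fin 4, (p,r) ∈ pairs5 →
      kempeCount (Qk k) g p r = 1 := by
    intro p r hpr
    rw [kempe_cls]
    exact card_cc_one _ (cls_connected hg h0 hpr)
  rcases fin4_all c with rfl|rfl|rfl|rfl <;> rcases fin4_all d with rfl|rfl|rfl|rfl
  · exact absurd rfl hcd
  · rw [if_neg (by decide)]; exact conn 0 1 (by decide)
  · rw [if_neg (by decide)]; exact conn 0 2 (by decide)
  · rw [if_neg (by decide)]; exact conn 0 3 (by decide)
  · rw [if_neg (by decide), kempe_symm]; exact conn 0 1 (by decide)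
  · exact absurd rfl hcd
  · rw [if_neg (by decide)]; exact conn 1 2 (by decide)
  · rw [if_pos (by decide), kempe_cls]; exact card13 hg h0
  · rw [if_neg (by decide), kempe_symm]; exact conn 0 2 (by decide)
  · rw [if_neg (by decide), kempe_symm]; exact conn 1 2 (by decide)
  · exact absurd rfl hcd
  · rw [if_neg (by decide)]; exact conn 2 3 (by decide)
  · rw [if_neg (by decide), kempe_symm]; exact conn 0 3 (by decide)
  · rw [if_pos (by decide), kempe_symm, kempe_cls]; exact card13 hg h0
  · rw [if_neg (by decide), kempe_symm]; exact conn 2 3 (by decide)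
  · exact absurd rfl hcd

end Table

/-! ### Arithmetic -/

def Tv (c d : Fin 4) : ℤ := if (c = 1 ∧ d = 3) ∨ (c = 3 ∧ d = 1) then 2 else 1

lemma odd_combo : ∀ u v w x : Fin 4, (u ≠ v ∧ u ≠ w ∧ u ≠ x ∧ v ≠ w ∧ v ≠ x ∧ w ≠ x) →
    (Tv u v + Tv u w + Tv u x - (Tv v w + Tv v x + Tv w x)) % 2 = 1 := by decide

set_option maxRecDepth 10000 in
lemma exists_perm : ∀ x y z : Fin 4, x ≠ y → y ≠ z → x ≠ z →
    ∃ σ : Equiv.Perm (Fin 4), σ x = 0 ∧ σ y = 1 ∧ σ z = 2 := by decide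

section Jexp

variable {V : Type*} (G : SimpleGraph V) (f : V → Fin 4)

lemma Jexp0 : Jcol G f 0 = (kempeCount G f 0 1 : ℤ) + kempeCount G f 0 2 + kempeCount G f 0 3
    - ((kempeCount G f 1 2 : ℤ) + kempeCount G f 1 3 + kempeCount G f 2 3) := by
  rw [Jcol]
  rw [show Finset.univ.erase (0 : Fin 4) = ({1,2,3} : Finset (Fin 4)) from by decide]
  rw [Finset.sum_insert (by decide), Finset.sum_insert (by decide), Finset.sum_singleton,
      Finset.sum_insert (by decide), Finset.sum_insert (by decide), Finset.sum_singleton]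
  rw [show ({1,2,3} : Finset (Fin 4)).filter (fun y => (1:Fin 4) < y) = {2,3} from by decide,
      show ({1,2,3} : Finset (Fin 4)).filter (fun y => (2:Fin 4) < y) = {3} from by decide,
      show ({1,2,3} : Finset (Fin 4)).filter (fun y => (3:Fin 4) < y) = ∅ from by decide]
  rw [Finset.sum_insert (by decide), Finset.sum_singleton, Finset.sum_singleton,
      Finset.sum_empty]
  ring

lemma Jexp1 : Jcol G f 1 = (kempeCount G f 1 0 : ℤ) + kempeCount G f 1 2 + kempeCount G f 1 3
    - ((kempeCount G f 0 2 : ℤ) + kempeCount G f 0 3 + kempeCount G f 2 3) := by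
  rw [Jcol]
  rw [show Finset.univ.erase (1 : Fin 4) = ({0,2,3} : Finset (Fin 4)) from by decide]
  rw [Finset.sum_insert (by decide), Finset.sum_insert (by decide), Finset.sum_singleton,
      Finset.sum_insert (by decide), Finset.sum_insert (by decide), Finset.sum_singleton]
  rw [show ({0,2,3} : Finset (Fin 4)).filter (fun y => (0:Fin 4) < y) = {2,3} from by decide,
      show ({0,2,3} : Finset (Fin 4)).filter (fun y => (2:Fin 4) < y) = {3} from by decide,
      show ({0,2,3} : Finset (Fin 4)).filter (fun y => (3:Fin 4) < y) = ∅ from by decide]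
  rw [Finset.sum_insert (by decide), Finset.sum_singleton, Finset.sum_singleton,
      Finset.sum_empty]
  ring

lemma Jexp2 : Jcol G f 2 = (kempeCount G f 2 0 : ℤ) + kempeCount G f 2 1 + kempeCount G f 2 3
    - ((kempeCount G f 0 1 : ℤ) + kempeCount G f 0 3 + kempeCount G f 1 3) := by
  rw [Jcol]
  rw [show Finset.univ.erase (2 : Fin 4) = ({0,1,3} : Finset (Fin 4)) from by decide]
  rw [Finset.sum_insert (by decide), Finset.sum_insert (by decide), Finset.sum_singleton,
      Finset.sum_insert (by decide), Finset.sum_insert (by decide), Finset.sum_singleton]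
  rw [show ({0,1,3} : Finset (Fin 4)).filter (fun y => (0:Fin 4) < y) = {1,3} from by decide,
      show ({0,1,3} : Finset (Fin 4)).filter (fun y => (1:Fin 4) < y) = {3} from by decide,
      show ({0,1,3} : Finset (Fin 4)).filter (fun y => (3:Fin 4) < y) = ∅ from by decide]
  rw [Finset.sum_insert (by decide), Finset.sum_singleton, Finset.sum_singleton,
      Finset.sum_empty]
  ring

lemma Jexp3 : Jcol G f 3 = (kempeCount G f 3 0 : ℤ) + kempeCount G f 3 1 + kempeCount G f 3 2
    - ((kempeCount G f 0 1 : ℤ) + kempeCount G f 0 2 + kempeCount G f 1 2) := by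
  rw [Jcol]
  rw [show Finset.univ.erase (3 : Fin 4) = ({0,1,2} : Finset (Fin 4)) from by decide]
  rw [Finset.sum_insert (by decide), Finset.sum_insert (by decide), Finset.sum_singleton,
      Finset.sum_insert (by decide), Finset.sum_insert (by decide), Finset.sum_singleton]
  rw [show ({0,1,2} : Finset (Fin 4)).filter (fun y => (0:Fin 4) < y) = {1,2} from by decide,
      show ({0,1,2} : Finset (Fin 4)).filter (fun y => (1:Fin 4) < y) = {2} from by decide,
      show ({0,1,2} : Finset (Fin 4)).filter (fun y => (2:Fin 4) < y) = ∅ from by decide]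
  rw [Finset.sum_insert (by decide), Finset.sum_singleton, Finset.sum_singleton,
      Finset.sum_empty]
  ring

end Jexp

end TII

/-- Every proper 4-coloring `f` of `Q_k` with `f(b_0) = f(d_0)` is odd: `J_a(f)` is odd
for every color `a`. -/
theorem typeII_coloring_odd (k : ℕ) (f : Fin (k + 2) × Fin 4 → Fin 4)
    (hf : IsProperColoring (Qk k) f)
    (hbd : f ((0 : Fin (k + 2)), (1 : Fin 4)) = f ((0 : Fin (k + 2)), (3 : Fin 4))) :
    ∀ a : Fin 4, Odd (Jcol (Qk k) f a) := by
  have had1 : (Qk k).Adj ((0 : Fin (k+2)), 0) ((0 : Fin (k+2)), 1) := TII.adj_cycle 0 0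
  have had2 : (Qk k).Adj ((0 : Fin (k+2)), 1) ((0 : Fin (k+2)), 2) := TII.adj_cycle 0 1
  have had3 := TII.adj_chord0 (k := k)
  obtain ⟨σ, hσ0, hσ1, hσ2⟩ := TII.exists_perm (f (0,0)) (f (0,1)) (f (0,2))
    (hf had1) (hf had2) (hf had3)
  have hg : IsProperColoring (Qk k) (fun v => σ (f v)) :=
    fun u v h e => hf h (σ.injective e)
  have h0 : TII.quad (fun v => σ (f v)) 0 = (0,1,2,1) := by
    show (σ (f (0,0)), σ (f (0,1)), σ (f (0,2)), σ (f (0,3))) = (0,1,2,1)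
    rw [hσ0, hσ1, hσ2, ← hbd, hσ1]
  have hk : ∀ c d : Fin 4, c ≠ d →
      ((kempeCount (Qk k) f c d : ℤ)) = TII.Tv (σ c) (σ d) := by
    intro c d hcd
    have h1 : kempeCount (Qk k) f c d = kempeCount (Qk k) (fun v => σ (f v)) (σ c) (σ d) := by
      unfold kempeCount
      rw [show {v | f v = c ∨ f v = d} = {v | σ (f v) = σ c ∨ σ (f v) = σ d} from
        Set.ext fun v => by simp [Equiv.apply_eq_iff_eq]]
    rw [h1, TII.kempe_table hg h0 (σ c) (σ d) (fun e => hcd (σ.injective e)), TII.Tv]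
    split_ifs <;> norm_num
  have hd : ∀ c d : Fin 4, c ≠ d → σ c ≠ σ d := fun c d hcd e => hcd (σ.injective e)
  intro a
  rcases TII.fin4_all a with rfl|rfl|rfl|rfl
  · rw [TII.Jexp0, hk 0 1 (by decide), hk 0 2 (by decide), hk 0 3 (by decide),
        hk 1 2 (by decide), hk 1 3 (by decide), hk 2 3 (by decide), Int.odd_iff]
    have := TII.odd_combo (σ 0) (σ 1) (σ 2) (σ 3) ⟨hd 0 1 (by decide), hd 0 2 (by decide),
      hd 0 3 (by decide), hd 1 2 (by decide), hd 1 3 (by decide), hd 2 3 (by decide)⟩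
    omega
  · rw [TII.Jexp1, hk 1 0 (by decide), hk 1 2 (by decide), hk 1 3 (by decide),
        hk 0 2 (by decide), hk 0 3 (by decide), hk 2 3 (by decide), Int.odd_iff]
    have := TII.odd_combo (σ 1) (σ 0) (σ 2) (σ 3) ⟨hd 1 0 (by decide), hd 1 2 (by decide),
      hd 1 3 (by decide), hd 0 2 (by decide), hd 0 3 (by decide), hd 2 3 (by decide)⟩
    omega
  · rw [TII.Jexp2, hk 2 0 (by decide), hk 2 1 (by decide), hk 2 3 (by decide),
        hk 0 1 (by decide), hk 0 3 (by decide), hk 1 3 (by decide), Int.odd_iff]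
    have := TII.odd_combo (σ 2) (σ 0) (σ 1) (σ 3) ⟨hd 2 0 (by decide), hd 2 1 (by decide),
      hd 2 3 (by decide), hd 0 1 (by decide), hd 0 3 (by decide), hd 1 3 (by decide)⟩
    omega
  · rw [TII.Jexp3, hk 3 0 (by decide), hk 3 1 (by decide), hk 3 2 (by decide),
        hk 0 1 (by decide), hk 0 2 (by decide), hk 1 2 (by decide), Int.odd_iff]
    have := TII.odd_combo (σ 3) (σ 0) (σ 1) (σ 2) ⟨hd 3 0 (by decide), hd 3 1 (by decide),
      hd 3 2 (by decide), hd 0 1 (by decide), hd 0 2 (by decide), hd 1 2 (by decide)⟩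
    omega
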